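/- Let K be a field and F ∈ K[[x,y]] with decomposition F = Σ_k F_k into ω-quasihomogeneous components of increasing ω-weight a+b = min weight, for a weight ω(i,j)=n·i+m·j. Suppose the lowest component satisfies F_{a+b} = f_a·g_b with f_a a power of x and g_b quasihomogeneous with g_b(0,1) ≠ 0 (so f_a and g_b are coprime). Then F factors as F = f·g in K[[x,y]] with lowest ω-components f_a and g_b respectively. -/

import Mathlib

private lemma hensel_dec_lex (k A B i j : ℕ) (hik : i ≤ k) (h : A < B ∨ (A = B ∧ i < j)) :
    A * (k + 1) + i < B * (k + 1) + j := by
  rcases h with h | ⟨rfl, hij⟩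
  · calc A * (k + 1) + i ≤ A * (k + 1) + k := Nat.add_le_add_left hik _
      _ < A * (k + 1) + (k + 1) := Nat.add_lt_add_left (Nat.lt_succ_self k) _
      _ = (A + 1) * (k + 1) := by ring
      _ ≤ B * (k + 1) := Nat.mul_le_mul_right _ h
      _ ≤ B * (k + 1) + j := Nat.le_add_right _ _
  · exact Nat.add_lt_add_left hij _

private lemma hensel_dec1 (k a W1 W2 W B i : ℕ) (hsum : W1 + W2 = W + a) (h2 : B ≤ W2)
    (hi : i < k) : (W1 - a) * (k + 1) + i < (W - B) * (k + 1) + k := by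
  apply hensel_dec_lex _ _ _ _ _ hi.le
  have hAB : W1 - a ≤ W - B := by omega
  rcases Nat.lt_or_ge (W1 - a) (W - B) with h | h
  · exact Or.inl h
  · exact Or.inr ⟨le_antisymm hAB h, hi⟩

private lemma hensel_dec2 (k a W1 W2 W B : ℕ) (hsum : W1 + W2 = W + a) (h1 : a < W1)
    (h2 : B ≤ W2) : (W2 - B) * (k + 1) + k < (W - B) * (k + 1) + k :=
  hensel_dec_lex _ _ _ _ _ (le_refl k) (Or.inl (by omega))

private lemma hensel_dec4 (k a W1 W2 W B i : ℕ) (hsum : W1 + W2 = W + B) (h1 : a < W1)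
    (h2 : B ≤ W2) : (W2 - B) * (k + 1) + k < (W - a) * (k + 1) + i :=
  hensel_dec_lex _ _ _ _ _ (le_refl k) (Or.inl (by omega))

noncomputable def henselSol {K : Type*} [Field K] (n m k b p : ℕ) (γ c : K)
    (F : MvPowerSeries (Fin 2) K)
    (hn : 0 < n) (hm : 0 < m) (hk : 1 ≤ k) (hb : m * p = b) :
    Bool → (Fin 2 →₀ ℕ) → K
  | false, v =>
    if _hv : n * v 0 + m * v 1 < b then 0
    else γ⁻¹ * (MvPowerSeries.coeff (v + Finsupp.single 0 k) F -
      ∑ x ∈ (Finset.HasAntidiagonal.antidiagonal (v + Finsupp.single 0 k)).attach,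
        if h : (x : (Fin 2 →₀ ℕ) × (Fin 2 →₀ ℕ)).1 0 < k ∧ n * k < n * (x : (Fin 2 →₀ ℕ) × (Fin 2 →₀ ℕ)).1 0 + m * (x : (Fin 2 →₀ ℕ) × (Fin 2 →₀ ℕ)).1 1 ∧
            b ≤ n * (x : (Fin 2 →₀ ℕ) × (Fin 2 →₀ ℕ)).2 0 + m * (x : (Fin 2 →₀ ℕ) × (Fin 2 →₀ ℕ)).2 1 then
          henselSol n m k b p γ c F hn hm hk hb true (x : (Fin 2 →₀ ℕ) × (Fin 2 →₀ ℕ)).1 *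
          henselSol n m k b p γ c F hn hm hk hb false (x : (Fin 2 →₀ ℕ) × (Fin 2 →₀ ℕ)).2
        else 0)
  | true, u =>
    if hu : u 0 < k ∧ n * k < n * u 0 + m * u 1 then
      c⁻¹ * (MvPowerSeries.coeff (u + Finsupp.single 1 p) F -
        ∑ x ∈ (Finset.HasAntidiagonal.antidiagonal (u + Finsupp.single 1 p)).attach,
          if h : ((x : (Fin 2 →₀ ℕ) × (Fin 2 →₀ ℕ)).1 0 < k ∧ n * k < n * (x : (Fin 2 →₀ ℕ) × (Fin 2 →₀ ℕ)).1 0 + m * (x : (Fin 2 →₀ ℕ) × (Fin 2 →₀ ℕ)).1 1 ∧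
              b ≤ n * (x : (Fin 2 →₀ ℕ) × (Fin 2 →₀ ℕ)).2 0 + m * (x : (Fin 2 →₀ ℕ) × (Fin 2 →₀ ℕ)).2 1) ∧
              (x : (Fin 2 →₀ ℕ) × (Fin 2 →₀ ℕ)) ≠ (u, Finsupp.single 1 p) then
            henselSol n m k b p γ c F hn hm hk hb true (x : (Fin 2 →₀ ℕ) × (Fin 2 →₀ ℕ)).1 *
            henselSol n m k b p γ c F hn hm hk hb false (x : (Fin 2 →₀ ℕ) × (Fin 2 →₀ ℕ)).2
          else 0)
    else 0
  termination_by bl e =>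
    if bl then (n * e 0 + m * e 1 - n * k) * (k + 1) + e 0
    else (n * e 0 + m * e 1 - b) * (k + 1) + k
  decreasing_by
  · -- false branch, call (true, x.1)
    obtain ⟨⟨u', v'⟩, hmem⟩ := x
    simp only [Finset.HasAntidiagonal.mem_antidiagonal] at hmem
    dsimp only at h ⊢
    simp only [if_true, if_false, reduceIte]
    have h0 := DFunLike.congr_fun hmem 0
    have h1 := DFunLike.congr_fun hmem 1
    simp [Finsupp.add_apply, Finsupp.single_apply] at h0 h1
    have hsum : (n * u' 0 + m * u' 1) + (n * v' 0 + m * v' 1) = (n * v 0 + m * v 1) + n * k := by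
      calc (n * u' 0 + m * u' 1) + (n * v' 0 + m * v' 1)
          = n * (u' 0 + v' 0) + m * (u' 1 + v' 1) := by ring
        _ = n * (v 0 + k) + m * (v 1) := by rw [h0, h1]
        _ = (n * v 0 + m * v 1) + n * k := by ring
    exact hensel_dec1 k (n * k) _ _ _ b _ hsum h.2.2 h.1
  · -- false branch, call (false, x.2)
    obtain ⟨⟨u', v'⟩, hmem⟩ := x
    simp only [Finset.HasAntidiagonal.mem_antidiagonal] at hmem
    dsimp only at h ⊢
    simp only [if_true, if_false, reduceIte]
    have h0 := DFunLike.congr_fun hmem 0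
    have h1 := DFunLike.congr_fun hmem 1
    simp [Finsupp.add_apply, Finsupp.single_apply] at h0 h1
    have hsum : (n * u' 0 + m * u' 1) + (n * v' 0 + m * v' 1) = (n * v 0 + m * v 1) + n * k := by
      calc (n * u' 0 + m * u' 1) + (n * v' 0 + m * v' 1)
          = n * (u' 0 + v' 0) + m * (u' 1 + v' 1) := by ring
        _ = n * (v 0 + k) + m * (v 1) := by rw [h0, h1]
        _ = (n * v 0 + m * v 1) + n * k := by ring
    exact hensel_dec2 k (n * k) _ _ _ b hsum h.2.1 h.2.2
  · -- true branch, call (true, x.1)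
    obtain ⟨⟨u', v'⟩, hmem⟩ := x
    simp only [Finset.HasAntidiagonal.mem_antidiagonal] at hmem
    dsimp only at h ⊢
    simp only [if_true, if_false, reduceIte]
    have h0 := DFunLike.congr_fun hmem 0
    have h1 := DFunLike.congr_fun hmem 1
    simp [Finsupp.add_apply, Finsupp.single_apply] at h0 h1
    have hsum : (n * u' 0 + m * u' 1) + (n * v' 0 + m * v' 1) = (n * u 0 + m * u 1) + b := by
      calc (n * u' 0 + m * u' 1) + (n * v' 0 + m * v' 1)
          = n * (u' 0 + v' 0) + m * (u' 1 + v' 1) := by ring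
        _ = n * (u 0) + m * (u 1 + p) := by rw [h0, h1]
        _ = (n * u 0 + m * u 1) + m * p := by ring
        _ = (n * u 0 + m * u 1) + b := by rw [hb]
    apply hensel_dec_lex _ _ _ _ _ h.1.1.le
    rcases Nat.lt_or_ge (n * u' 0 + m * u' 1) (n * u 0 + m * u 1) with hc | hc
    · exact Or.inl (Nat.sub_lt_sub_right h.1.2.1.le hc)
    · -- equal weights case
      have heq : n * u' 0 + m * u' 1 = n * u 0 + m * u 1 := by
        have := h.1.2.2; omega
      have hv'w : n * v' 0 + m * v' 1 = b := by omega
      right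
      refine ⟨by rw [heq], ?_⟩
      by_contra hcon
      push_neg at hcon
      have hv0 : v' 0 = 0 ∧ u' 0 = u 0 := by omega
      have hv1 : v' 1 = p := by
        have : m * v' 1 = m * p := by
          rw [hb, ← hv'w, hv0.1]; ring
        exact Nat.eq_of_mul_eq_mul_left hm this
      have hveq : v' = Finsupp.single 1 p := by
        ext i
        fin_cases i
        · simp [Finsupp.single_apply, hv0.1]
        · simp [Finsupp.single_apply, hv1]
      have hueq : u' = u := by
        ext i
        fin_cases i
        · simpa using hv0.2
        · have : u' 1 + v' 1 = u 1 + p := h1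
          rw [hv1] at this
          simpa using Nat.add_right_cancel this
      exact h.2 (by rw [hueq, hveq])
  · -- true branch, call (false, x.2)
    obtain ⟨⟨u', v'⟩, hmem⟩ := x
    simp only [Finset.HasAntidiagonal.mem_antidiagonal] at hmem
    dsimp only at h ⊢
    simp only [if_true, if_false, reduceIte]
    have h0 := DFunLike.congr_fun hmem 0
    have h1 := DFunLike.congr_fun hmem 1
    simp [Finsupp.add_apply, Finsupp.single_apply] at h0 h1
    have hsum : (n * u' 0 + m * u' 1) + (n * v' 0 + m * v' 1) = (n * u 0 + m * u 1) + b := by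
      calc (n * u' 0 + m * u' 1) + (n * v' 0 + m * v' 1)
          = n * (u' 0 + v' 0) + m * (u' 1 + v' 1) := by ring
        _ = n * (u 0) + m * (u 1 + p) := by rw [h0, h1]
        _ = (n * u 0 + m * u 1) + m * p := by ring
        _ = (n * u 0 + m * u 1) + b := by rw [hb]
    exact hensel_dec4 k (n * k) _ _ _ b _ hsum h.1.2.1 h.1.2.2

private abbrev hG (n m k b : ℕ) (x : (Fin 2 →₀ ℕ) × (Fin 2 →₀ ℕ)) : Prop :=
  x.1 0 < k ∧ n * k < n * x.1 0 + m * x.1 1 ∧ b ≤ n * x.2 0 + m * x.2 1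

private abbrev hG2 (n m k b p : ℕ) (u : Fin 2 →₀ ℕ) (x : (Fin 2 →₀ ℕ) × (Fin 2 →₀ ℕ)) : Prop :=
  hG n m k b x ∧ x ≠ (u, Finsupp.single 1 p)

section Unfold

variable {K : Type*} [Field K] (n m k b p : ℕ) (γ c : K) (F : MvPowerSeries (Fin 2) K)
  (hn : 0 < n) (hm : 0 < m) (hk : 1 ≤ k) (hb : m * p = b)

private lemma henselSol_false_zero (v : Fin 2 →₀ ℕ) (hv : n * v 0 + m * v 1 < b) :
    henselSol n m k b p γ c F hn hm hk hb false v = 0 := by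
  rw [henselSol]
  rw [dif_pos hv]

private lemma henselSol_true_zero (u : Fin 2 →₀ ℕ) (hu : ¬(u 0 < k ∧ n * k < n * u 0 + m * u 1)) :
    henselSol n m k b p γ c F hn hm hk hb true u = 0 := by
  rw [henselSol]
  rw [dif_neg hu]

private lemma henselSol_false_eq (hγ : γ ≠ 0) (v : Fin 2 →₀ ℕ) (hv : ¬ n * v 0 + m * v 1 < b) :
    γ * henselSol n m k b p γ c F hn hm hk hb false v =
      MvPowerSeries.coeff (v + Finsupp.single 0 k) F -
      ∑ x ∈ Finset.HasAntidiagonal.antidiagonal (v + Finsupp.single 0 k),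
        (if hG n m k b x then
          henselSol n m k b p γ c F hn hm hk hb true x.1 *
          henselSol n m k b p γ c F hn hm hk hb false x.2
        else 0) := by
  conv_lhs => rw [henselSol]
  rw [dif_neg hv, ← mul_assoc, mul_inv_cancel₀ hγ, one_mul]
  congr 1
  rw [← Finset.sum_attach (Finset.HasAntidiagonal.antidiagonal (v + Finsupp.single 0 k))
    (fun x => if hG n m k b x then
      henselSol n m k b p γ c F hn hm hk hb true x.1 *
      henselSol n m k b p γ c F hn hm hk hb false x.2 else 0)]
  exact Finset.sum_congr rfl fun x _ => by rw [dif_eq_if]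

private lemma henselSol_true_eq (hc : c ≠ 0) (u : Fin 2 →₀ ℕ)
    (hu : u 0 < k ∧ n * k < n * u 0 + m * u 1) :
    c * henselSol n m k b p γ c F hn hm hk hb true u =
      MvPowerSeries.coeff (u + Finsupp.single 1 p) F -
      ∑ x ∈ Finset.HasAntidiagonal.antidiagonal (u + Finsupp.single 1 p),
        (if hG2 n m k b p u x then
          henselSol n m k b p γ c F hn hm hk hb true x.1 *
          henselSol n m k b p γ c F hn hm hk hb false x.2
        else 0) := by
  conv_lhs => rw [henselSol]
  rw [dif_pos hu, ← mul_assoc, mul_inv_cancel₀ hc, one_mul]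
  congr 1
  rw [← Finset.sum_attach (Finset.HasAntidiagonal.antidiagonal (u + Finsupp.single 1 p))
    (fun x => if hG2 n m k b p u x then
      henselSol n m k b p γ c F hn hm hk hb true x.1 *
      henselSol n m k b p γ c F hn hm hk hb false x.2 else 0)]
  exact Finset.sum_congr rfl fun x _ => by rw [dif_eq_if]

end Unfold

theorem stmt_13 (K : Type*) [Field K] (n m k b : ℕ)
    (hn : 0 < n) (hm : 0 < m) (hk : 1 ≤ k)
    (γ : K) (hγ : γ ≠ 0)
    (gb : MvPolynomial (Fin 2) K)
    (hgb : MvPolynomial.IsWeightedHomogeneous ![n, m] gb b)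
    (hgx : MvPolynomial.eval ![(0 : K), 1] gb ≠ 0)
    (F : MvPowerSeries (Fin 2) K)
    (hlow : ∀ e : Fin 2 →₀ ℕ, n * e 0 + m * e 1 < n * k + b →
      MvPowerSeries.coeff e F = 0)
    (hinit : ∀ e : Fin 2 →₀ ℕ, n * e 0 + m * e 1 = n * k + b →
      MvPowerSeries.coeff e F =
        MvPolynomial.coeff e (MvPolynomial.C γ * MvPolynomial.X 0 ^ k * gb)) :
    ∃ f g : MvPowerSeries (Fin 2) K, F = f * g ∧
      (∀ e : Fin 2 →₀ ℕ, n * e 0 + m * e 1 < n * k → MvPowerSeries.coeff e f = 0) ∧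
      (∀ e : Fin 2 →₀ ℕ, n * e 0 + m * e 1 = n * k →
        MvPowerSeries.coeff e f =
          MvPolynomial.coeff e (MvPolynomial.C γ * MvPolynomial.X 0 ^ k)) ∧
      (∀ e : Fin 2 →₀ ℕ, n * e 0 + m * e 1 < b → MvPowerSeries.coeff e g = 0) ∧
      (∀ e : Fin 2 →₀ ℕ, n * e 0 + m * e 1 = b →
        MvPowerSeries.coeff e g = MvPolynomial.coeff e gb) := by
  classical
  -- additivity of the weight
  have wsum : ∀ a b' e : Fin 2 →₀ ℕ, a + b' = e →
      (n * a 0 + m * a 1) + (n * b' 0 + m * b' 1) = n * e 0 + m * e 1 := by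
    intro a b' e h
    have h0 := DFunLike.congr_fun h 0
    have h1 := DFunLike.congr_fun h 1
    simp only [Finsupp.add_apply] at h0 h1
    calc (n * a 0 + m * a 1) + (n * b' 0 + m * b' 1)
        = n * (a 0 + b' 0) + m * (a 1 + b' 1) := by ring
      _ = n * e 0 + m * e 1 := by rw [h0, h1]
  -- weights of monomials of gb
  have hgbw : ∀ d : Fin 2 →₀ ℕ, MvPolynomial.coeff d gb ≠ 0 → n * d 0 + m * d 1 = b := by
    intro d hd
    have hw := hgb hd
    rw [Finsupp.weight_apply, Finsupp.sum_fintype] at hw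
    · rw [Fin.sum_univ_two] at hw
      simp only [Matrix.cons_val_zero, Matrix.cons_val_one, Matrix.head_cons, smul_eq_mul] at hw
      rw [← hw]; ring
    · intro i; simp
  -- the pure-y monomial of gb
  obtain ⟨d0, hd0sup, hd00⟩ : ∃ d ∈ gb.support, d 0 = 0 := by
    by_contra hcon
    push_neg at hcon
    apply hgx
    rw [MvPolynomial.eval_eq']
    apply Finset.sum_eq_zero
    intro d hd
    rw [Fin.prod_univ_two]
    simp only [Matrix.cons_val_zero, Matrix.cons_val_one, Matrix.head_cons, one_pow, mul_one]
    rw [zero_pow (hcon d hd), mul_zero]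
  set p := d0 1 with hp
  have hd0e : d0 = Finsupp.single 1 p := by
    ext i; fin_cases i
    · simpa [Finsupp.single_apply] using hd00
    · simp [Finsupp.single_apply, hp]
  have hb : m * p = b := by
    have h := hgbw d0 (MvPolynomial.mem_support_iff.mp hd0sup)
    rw [hd00] at h; simpa using h
  set c := MvPolynomial.coeff (Finsupp.single 1 p) gb with hcdef
  have hc : c ≠ 0 := by rw [hcdef, ← hd0e]; exact MvPolynomial.mem_support_iff.mp hd0sup
  -- weights of δ and v*
  have wdelta : n * (Finsupp.single 0 k : Fin 2 →₀ ℕ) 0 + m * (Finsupp.single 0 k : Fin 2 →₀ ℕ) 1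
      = n * k := by
    simp [Finsupp.single_apply]
  have wvstar : n * (Finsupp.single 1 p : Fin 2 →₀ ℕ) 0 + m * (Finsupp.single 1 p : Fin 2 →₀ ℕ) 1
      = b := by
    simp [Finsupp.single_apply, hb]
  -- coefficients of the low part
  have PL : ∀ e : Fin 2 →₀ ℕ,
      MvPolynomial.coeff e (MvPolynomial.C γ * MvPolynomial.X 0 ^ k * gb)
      = if Finsupp.single 0 k ≤ e then γ * MvPolynomial.coeff (e - Finsupp.single 0 k) gb
        else 0 := by
    intro e
    rw [MvPolynomial.C_mul_X_pow_eq_monomial, mul_comm, MvPolynomial.coeff_mul_monomial']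
    split_ifs with h
    · ring
    · rfl
  set S := henselSol n m k b p γ c F hn hm hk hb with hS
  set f : MvPowerSeries (Fin 2) K :=
    (fun u => if u = Finsupp.single 0 k then γ else S true u) with hf
  set g : MvPowerSeries (Fin 2) K := S false with hg
  have Gz := henselSol_false_zero n m k b p γ c F hn hm hk hb
  rw [← hS] at Gz
  have Tz := henselSol_true_zero n m k b p γ c F hn hm hk hb
  rw [← hS] at Tz
  -- g matches gb in weight b
  have gB : ∀ v : Fin 2 →₀ ℕ, n * v 0 + m * v 1 = b → S false v = MvPolynomial.coeff v gb := by
    intro v hv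
    have hnl : ¬ n * v 0 + m * v 1 < b := by omega
    have heq := henselSol_false_eq n m k b p γ c F hn hm hk hb hγ v hnl
    rw [← hS] at heq
    have hwvd := wsum v (Finsupp.single 0 k) _ rfl
    rw [wdelta] at hwvd
    have hz : ∑ x ∈ Finset.HasAntidiagonal.antidiagonal (v + Finsupp.single 0 k),
        (if hG n m k b x then S true x.1 * S false x.2 else 0) = 0 := by
      apply Finset.sum_eq_zero
      intro x hx
      rw [Finset.HasAntidiagonal.mem_antidiagonal] at hx
      have hw := wsum _ _ _ hx
      rw [if_neg]
      rintro ⟨-, h2, h3⟩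
      omega
    rw [hz, sub_zero] at heq
    have hini := hinit (v + Finsupp.single 0 k) (by omega)
    have hle : Finsupp.single 0 k ≤ v + Finsupp.single 0 k := le_add_self
    rw [hini, PL, if_pos hle, add_tsub_cancel_right] at heq
    exact mul_left_cancel₀ hγ heq
  have coefff : ∀ e : Fin 2 →₀ ℕ,
      MvPowerSeries.coeff e f = if e = Finsupp.single 0 k then γ else S true e := by
    intro e; rw [hf]; rfl
  have coeffg : ∀ e : Fin 2 →₀ ℕ, MvPowerSeries.coeff e g = S false e := by
    intro e; rw [hg]; rfl
  -- step A : splitting the product coefficient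
  have stepA : ∀ e : Fin 2 →₀ ℕ,
      ∑ x ∈ Finset.HasAntidiagonal.antidiagonal e, MvPowerSeries.coeff x.1 f * MvPowerSeries.coeff x.2 g
      = (if Finsupp.single 0 k ≤ e then γ * S false (e - Finsupp.single 0 k) else 0)
        + ∑ x ∈ Finset.HasAntidiagonal.antidiagonal e,
            (if hG n m k b x then S true x.1 * S false x.2 else 0) := by
    intro e
    have hterm : ∀ x ∈ Finset.HasAntidiagonal.antidiagonal e,
        MvPowerSeries.coeff x.1 f * MvPowerSeries.coeff x.2 g
        = (if x.1 = Finsupp.single 0 k then γ * S false x.2 else 0)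
          + (if hG n m k b x then S true x.1 * S false x.2 else 0) := by
      intro x _
      rw [coefff, coeffg]
      by_cases hxd : x.1 = Finsupp.single 0 k
      · rw [if_pos hxd, if_pos hxd, if_neg, add_zero]
        intro hgd
        have h1 := hgd.1
        rw [hxd] at h1
        simp at h1
      · rw [if_neg hxd, if_neg hxd, zero_add]
        by_cases hgd : hG n m k b x
        · rw [if_pos hgd]
        · rw [if_neg hgd]
          rcases Classical.em (x.1 0 < k ∧ n * k < n * x.1 0 + m * x.1 1) with hg1 | hg1
          · have h3 : ¬ b ≤ n * x.2 0 + m * x.2 1 := fun hb3 => hgd ⟨hg1.1, hg1.2, hb3⟩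
            rw [Gz x.2 (by omega), mul_zero]
          · rw [Tz x.1 hg1, zero_mul]
    rw [Finset.sum_congr rfl hterm, Finset.sum_add_distrib]
    congr 1
    by_cases hde : Finsupp.single 0 k ≤ e
    · rw [if_pos hde]
      rw [Finset.sum_eq_single (Finsupp.single 0 k, e - Finsupp.single 0 k)]
      · rw [if_pos rfl]
      · rintro ⟨x1, x2⟩ hx hne
        rw [Finset.HasAntidiagonal.mem_antidiagonal] at hx
        rw [if_neg]
        intro hxd
        apply hne
        have hxd' : x1 = Finsupp.single 0 k := hxd
        subst hxd'
        have hx2 : x2 = e - Finsupp.single 0 k := eq_tsub_of_add_eq (by rw [add_comm]; exact hx)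
        rw [hx2]
      · intro hne
        exact absurd (Finset.HasAntidiagonal.mem_antidiagonal.mpr (add_tsub_cancel_of_le hde)) hne
    · rw [if_neg hde]
      apply Finset.sum_eq_zero
      rintro ⟨x1, x2⟩ hx
      rw [Finset.HasAntidiagonal.mem_antidiagonal] at hx
      rw [if_neg]
      intro hxd
      apply hde
      have hxd' : x1 = Finsupp.single 0 k := hxd
      subst hxd'
      calc Finsupp.single 0 k ≤ Finsupp.single 0 k + x2 := le_self_add
        _ = e := hx
  -- the main factorization
  have main : F = f * g := by
    apply MvPowerSeries.ext
    intro e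
    rw [MvPowerSeries.coeff_mul, stepA e]
    rcases lt_trichotomy (n * e 0 + m * e 1) (n * k + b) with hcase | hcase | hcase
    · rw [hlow e hcase]
      have hz : ∑ x ∈ Finset.HasAntidiagonal.antidiagonal e,
          (if hG n m k b x then S true x.1 * S false x.2 else 0) = 0 := by
        apply Finset.sum_eq_zero
        intro x hx
        rw [Finset.HasAntidiagonal.mem_antidiagonal] at hx
        have hw := wsum _ _ _ hx
        rw [if_neg]
        rintro ⟨-, h2, h3⟩
        omega
      rw [hz, add_zero]
      by_cases hde : Finsupp.single 0 k ≤ e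
      · rw [if_pos hde]
        have he : (e - Finsupp.single 0 k) + Finsupp.single 0 k = e := tsub_add_cancel_of_le hde
        have hw := wsum _ _ _ he
        rw [wdelta] at hw
        rw [Gz _ (by omega), mul_zero]
      · rw [if_neg hde]
    · rw [hinit e hcase, PL e]
      have hz : ∑ x ∈ Finset.HasAntidiagonal.antidiagonal e,
          (if hG n m k b x then S true x.1 * S false x.2 else 0) = 0 := by
        apply Finset.sum_eq_zero
        intro x hx
        rw [Finset.HasAntidiagonal.mem_antidiagonal] at hx
        have hw := wsum _ _ _ hx
        rw [if_neg]
        rintro ⟨-, h2, h3⟩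
        omega
      rw [hz, add_zero]
      by_cases hde : Finsupp.single 0 k ≤ e
      · rw [if_pos hde, if_pos hde]
        have he : (e - Finsupp.single 0 k) + Finsupp.single 0 k = e := tsub_add_cancel_of_le hde
        have hw := wsum _ _ _ he
        rw [wdelta] at hw
        rw [gB _ (by omega)]
      · rw [if_neg hde, if_neg hde]
    · by_cases hde : Finsupp.single 0 k ≤ e
      · rw [if_pos hde]
        have he : (e - Finsupp.single 0 k) + Finsupp.single 0 k = e := tsub_add_cancel_of_le hde
        have hw := wsum _ _ _ he
        rw [wdelta] at hw
        have heq := henselSol_false_eq n m k b p γ c F hn hm hk hb hγ (e - Finsupp.single 0 k)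
          (by omega)
        rw [← hS, he] at heq
        rw [heq]
        ring
      · rw [if_neg hde, zero_add]
        have he0 : ¬ k ≤ e 0 := fun h => hde (Finsupp.single_le_iff.mpr h)
        have hp1 : p ≤ e 1 := by
          by_contra hcon
          push_neg at hcon
          have c1 : n * e 0 + n ≤ n * k := by
            have h' := Nat.mul_le_mul_left n (show e 0 + 1 ≤ k by omega)
            calc n * e 0 + n = n * (e 0 + 1) := by ring
              _ ≤ n * k := h'
          have c2 : m * e 1 + m ≤ m * p := by
            have h' := Nat.mul_le_mul_left m (show e 1 + 1 ≤ p by omega)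
            calc m * e 1 + m = m * (e 1 + 1) := by ring
              _ ≤ m * p := h'
          omega
        have hvle : Finsupp.single 1 p ≤ e := Finsupp.single_le_iff.mpr hp1
        have he : (e - Finsupp.single 1 p) + Finsupp.single 1 p = e := tsub_add_cancel_of_le hvle
        have hw := wsum _ _ _ he
        rw [wvstar] at hw
        have hu0 : (e - Finsupp.single 1 p : Fin 2 →₀ ℕ) 0 = e 0 := by
          rw [Finsupp.tsub_apply]
          simp [Finsupp.single_apply]
        have hguard : (e - Finsupp.single 1 p : Fin 2 →₀ ℕ) 0 < k ∧
            n * k < n * (e - Finsupp.single 1 p : Fin 2 →₀ ℕ) 0 +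
              m * (e - Finsupp.single 1 p : Fin 2 →₀ ℕ) 1 := by
          constructor
          · rw [hu0]; omega
          · omega
        have heq := henselSol_true_eq n m k b p γ c F hn hm hk hb hc (e - Finsupp.single 1 p)
          hguard
        rw [← hS, he] at heq
        have hmem : ((e - Finsupp.single 1 p), Finsupp.single 1 p) ∈ Finset.HasAntidiagonal.antidiagonal e :=
          Finset.HasAntidiagonal.mem_antidiagonal.mpr he
        rw [← Finset.add_sum_erase _ _ hmem]
        have hterm : (if hG n m k b ((e - Finsupp.single 1 p), Finsupp.single 1 p) then
            S true (e - Finsupp.single 1 p) * S false (Finsupp.single 1 p) else 0)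
            = S true (e - Finsupp.single 1 p) * c := by
          rw [if_pos ⟨hguard.1, hguard.2, le_of_eq wvstar.symm⟩, gB _ wvstar]
        rw [hterm]
        have hrest : ∑ x ∈ (Finset.HasAntidiagonal.antidiagonal e).erase
              ((e - Finsupp.single 1 p), Finsupp.single 1 p),
              (if hG n m k b x then S true x.1 * S false x.2 else 0)
            = ∑ x ∈ Finset.HasAntidiagonal.antidiagonal e,
              (if hG2 n m k b p (e - Finsupp.single 1 p) x then S true x.1 * S false x.2
               else 0) := by
          rw [← Finset.add_sum_erase _
            (fun x => if hG2 n m k b p (e - Finsupp.single 1 p) x then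
              S true x.1 * S false x.2 else 0) hmem]
          rw [if_neg (fun hcon => hcon.2 rfl), zero_add]
          apply Finset.sum_congr rfl
          intro x hx
          have hne := (Finset.mem_erase.mp hx).1
          by_cases hgx' : hG n m k b x
          · rw [if_pos hgx', if_pos ⟨hgx', hne⟩]
          · rw [if_neg hgx', if_neg (fun hcon => hgx' hcon.1)]
        rw [hrest]
        linear_combination -heq
  refine ⟨f, g, main, ?_, ?_, ?_, ?_⟩
  · intro e he
    rw [coefff]
    by_cases hed : e = Finsupp.single 0 k
    · exfalso
      rw [hed] at he
      omega
    · rw [if_neg hed]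
      apply Tz
      rintro ⟨-, h2⟩
      omega
  · intro e he
    rw [coefff, MvPolynomial.C_mul_X_pow_eq_monomial, MvPolynomial.coeff_monomial]
    by_cases hed : e = Finsupp.single 0 k
    · rw [if_pos hed, if_pos hed.symm]
    · rw [if_neg hed, if_neg (fun h => hed h.symm)]
      apply Tz
      rintro ⟨-, h2⟩
      omega
  · intro e he
    rw [coeffg]
    exact Gz e he
  · intro e he
    rw [coeffg]
    exact gB e he
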